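/- Let (x, x₁) be a Mannheim D-pair of type 1 in Minkowski 3-space with g = n₁ at corresponding points, T₁ = cosh θ·T - sinh θ·n, g₁ = -sinh θ·T + cosh θ·n. Then differentiating ⟨T, n₁⟩ = 0 with respect to s₁ gives k_g·(ds/ds₁) = -k_{n₁}·cosh θ + τ_{g₁}·sinh θ. -/
import Mathlib


noncomputable section

open Real

/-- Minkowski inner product on ℝ³: ⟨u,v⟩ = -u₁v₁ + u₂v₂ + u₃v₃. -/
def mink (u v : Fin 3 → ℝ) : ℝ := -(u 0 * v 0) + u 1 * v 1 + u 2 * v 2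

/-- Lorentzian cross product on Minkowski 3-space. -/
def lcross (u v : Fin 3 → ℝ) : Fin 3 → ℝ :=
  ![u 1 * v 2 - u 2 * v 1, u 0 * v 2 - u 2 * v 0, u 1 * v 0 - u 0 * v 1]

/-- Theorem 4.3 (iii): differentiating ⟨T,n₁⟩ = 0 gives
k_g·(ds/ds₁) = -k_{n₁}·cosh θ + τ_{g₁}·sinh θ.  Everything is a function of s₁. -/
theorem mannheim_type1_kg_relation
    (T T₁ g g₁ n n₁ : ℝ → Fin 3 → ℝ)
    (kg kn τg kg₁ kn₁ τg₁ σ θ : ℝ → ℝ)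
    (hT₁ : ∀ s, T₁ s = Real.cosh (θ s) • T s - Real.sinh (θ s) • n s)
    (hg₁ : ∀ s, g₁ s = (-Real.sinh (θ s)) • T s + Real.cosh (θ s) • n s)
    (hgn₁ : ∀ s, g s = n₁ s)
    (hTn₁ : ∀ s, mink (T s) (n₁ s) = 0)
    (hTd : ∀ s, HasDerivAt T (σ s • (kg s • g s + kn s • n s)) s)
    (hn₁d : ∀ s, HasDerivAt n₁ (kn₁ s • T₁ s + τg₁ s • g₁ s) s)
    (h1 : ∀ s, mink (T s) (T s) = 1) (h2 : ∀ s, mink (g s) (g s) = 1)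
    (h3 : ∀ s, mink (n s) (n s) = -1)
    (h4 : ∀ s, mink (T s) (g s) = 0) (h5 : ∀ s, mink (T s) (n s) = 0)
    (h6 : ∀ s, mink (g s) (n s) = 0)
    (h7 : ∀ s, mink (T₁ s) (T₁ s) = 1) (h8 : ∀ s, mink (g₁ s) (g₁ s) = -1)
    (h9 : ∀ s, mink (n₁ s) (n₁ s) = 1)
    (h10 : ∀ s, mink (T₁ s) (g₁ s) = 0) (h11 : ∀ s, mink (T₁ s) (n₁ s) = 0)
    (h12 : ∀ s, mink (g₁ s) (n₁ s) = 0) :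
    ∀ s, kg s * σ s = -(kn₁ s) * Real.cosh (θ s) + τg₁ s * Real.sinh (θ s) := by
  intro s
  -- component derivatives
  have hT' := hasDerivAt_pi.1 (hTd s)
  have hn' := hasDerivAt_pi.1 (hn₁d s)
  -- derivative of the scalar product
  have hF : HasDerivAt (fun u => mink (T u) (n₁ u))
      (-(((σ s • (kg s • g s + kn s • n s)) 0) * n₁ s 0
          + T s 0 * ((kn₁ s • T₁ s + τg₁ s • g₁ s) 0))
        + (((σ s • (kg s • g s + kn s • n s)) 1) * n₁ s 1
          + T s 1 * ((kn₁ s • T₁ s + τg₁ s • g₁ s) 1))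
        + (((σ s • (kg s • g s + kn s • n s)) 2) * n₁ s 2
          + T s 2 * ((kn₁ s • T₁ s + τg₁ s • g₁ s) 2))) s := by
    simp only [mink]
    exact ((((hT' 0).mul (hn' 0)).neg).add ((hT' 1).mul (hn' 1))).add
      ((hT' 2).mul (hn' 2))
  have hzero : HasDerivAt (fun u => mink (T u) (n₁ u)) 0 s := by
    have : (fun u => mink (T u) (n₁ u)) = fun _ => (0 : ℝ) := funext fun u => hTn₁ u
    rw [this]; exact hasDerivAt_const s 0
  have hE := hF.unique hzero
  have e1 := h1 s
  have e2 := h2 s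
  have e5 := h5 s
  have e6 := h6 s
  have eg := hgn₁ s
  rw [← eg] at hE
  rw [hT₁ s, hg₁ s] at hE
  simp only [mink, Pi.add_apply, Pi.sub_apply, Pi.smul_apply, smul_eq_mul] at hE e1 e2 e5 e6 ⊢
  linear_combination hE - kg s * σ s * e2 - σ s * kn s * e6
    - kn₁ s * Real.cosh (θ s) * e1 + kn₁ s * Real.sinh (θ s) * e5
    + τg₁ s * Real.sinh (θ s) * e1 - τg₁ s * Real.cosh (θ s) * e5
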